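/- Let D be a strongly connected digraph, v_1 a vertex, and v_2, v_3 two further vertices. Then there exist a vertex b and directed paths P_1 from v_1 to b, P_2 from b to v_2, and P_3 from b to v_3 in D such that P_1, P_2, P_3 are pairwise internally vertex-disjoint and internally avoid {v_1, v_2, v_3, b} as appropriate (i.e., they only share the vertex b, and P_1 ends where P_2, P_3 begin). -/

import Mathlib

/-- `l` is a directed path in `(V, A)` from `x` to `y` (a list of distinct vertices
following arcs of `A`). -/
def IsDiPath {V : Type*} (A : V → V → Prop) (l : List V) (x y : V) : Prop :=
  List.Chain' A l ∧ l.Nodup ∧ l.head? = some x ∧ l.getLast? = some y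

/-- The digraph `(V, A)` is strongly connected. -/
def StronglyConnected {V : Type*} (A : V → V → Prop) : Prop :=
  ∀ u v : V, Relation.ReflTransGen A u v

section Aux
variable {V : Type*} {A : V → V → Prop}

lemma mem_dropLast_of_mem_tail_dropLast {x : V} {l : List V}
    (h : x ∈ l.tail.dropLast) : x ∈ l.dropLast := by
  cases l with
  | nil => simp at h
  | cons a l' =>
    simp only [List.tail_cons] at h
    cases l' with
    | nil => simp at h
    | cons b l'' =>
      rw [List.dropLast_cons₂]
      exact List.mem_cons_of_mem _ h

lemma ne_getLast_of_mem_dropLast {x y : V} {l : List V} (hnd : l.Nodup)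
    (hl : l.getLast? = some y) (hx : x ∈ l.dropLast) : x ≠ y := by
  have hne : l ≠ [] := by rintro rfl; simp at hl
  have hsplit := List.dropLast_append_getLast hne
  have hy : y = l.getLast hne := by
    rw [List.getLast?_eq_getLast hne] at hl; exact (Option.some_inj.mp hl).symm
  rw [← hsplit] at hnd
  have hd := List.disjoint_of_nodup_append hnd
  intro hxy
  exact hd hx (by simp [hy, hxy])

lemma ne_head_of_mem_tail {x y : V} {l : List V} (hnd : l.Nodup)
    (hl : l.head? = some y) (hx : x ∈ l.tail) : x ≠ y := by
  cases l with
  | nil => simp at hl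
  | cons a l' =>
    simp only [List.head?_cons, Option.some_inj] at hl
    subst hl
    simp only [List.nodup_cons] at hnd
    intro h; subst h; exact hnd.1 hx

lemma mem_of_head? {x : V} {l : List V} (h : l.head? = some x) : x ∈ l := by
  cases l with
  | nil => simp at h
  | cons a l' => simp_all

lemma mem_of_getLast? {x : V} {l : List V} (h : l.getLast? = some x) : x ∈ l := by
  have hne : l ≠ [] := by rintro rfl; simp at h
  rw [List.getLast?_eq_getLast hne, Option.some_inj] at h
  rw [← h]; exact List.getLast_mem hne

lemma getLast?_of_suffix {l₁ l₂ : List V} (h : l₁ <:+ l₂) (hne : l₁ ≠ []) :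
    l₂.getLast? = l₁.getLast? := by
  obtain ⟨s, rfl⟩ := h
  exact List.getLast?_append_of_ne_nil s hne

/-- Any `ReflTransGen` pair is joined by a directed (nodup) path. -/
lemma exists_dipath {x y : V} (h : Relation.ReflTransGen A x y) :
    ∃ l, IsDiPath A l x y := by
  induction h using Relation.ReflTransGen.head_induction_on with
  | refl => exact ⟨[y], List.isChain_singleton y, List.nodup_singleton y, rfl, rfl⟩
  | head hxz _ ih =>
    rename_i x z _
    obtain ⟨l, hc, hnd, hh, hl⟩ := ih
    by_cases hx : x ∈ l
    · obtain ⟨s, t, rfl⟩ := List.append_of_mem hx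
      refine ⟨x :: t, hc.suffix ⟨s, rfl⟩, hnd.sublist (List.sublist_append_right s _), rfl, ?_⟩
      rw [← hl, List.getLast?_append_of_ne_nil s (by simp)]
    · have hlne : l ≠ [] := by rintro rfl; simp at hh
      refine ⟨x :: l, List.isChain_cons.mpr ⟨?_, hc⟩, List.nodup_cons.mpr ⟨hx, hnd⟩, rfl, ?_⟩
      · intro w hw; rw [hh, Option.mem_some_iff] at hw; exact hw ▸ hxz
      · rw [← hl]; exact List.getLast?_append_of_ne_nil [x] hlne

/-- From a path starting on `P` one can extract a final segment meeting `P` only in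
its first vertex. -/
lemma exists_exit (P : List V) :
    ∀ (n : ℕ) (R : List V), R.length ≤ n → ∀ u v₃ : V, IsDiPath A R u v₃ → u ∈ P →
    ∃ b, b ∈ P ∧ ∃ P₃, IsDiPath A P₃ b v₃ ∧ ∀ x ∈ P₃.tail, x ∉ P := by
  intro n
  induction n with
  | zero =>
    intro R hR u v₃ hpath _
    have hne : R ≠ [] := by rintro rfl; simp [IsDiPath] at hpath
    exact absurd (List.length_eq_zero_iff.mp (Nat.le_zero.mp hR)) hne
  | succ n ih =>
    intro R hR u v₃ hpath hu
    obtain ⟨hc, hnd, hh, hl⟩ := hpath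
    obtain ⟨rest, rfl⟩ : ∃ rest, R = u :: rest := by
      cases R with
      | nil => simp at hh
      | cons a r => simp only [List.head?_cons, Option.some_inj] at hh; exact ⟨r, by rw [hh]⟩
    by_cases hall : ∀ x ∈ rest, x ∉ P
    · exact ⟨u, hu, u :: rest, ⟨hc, hnd, rfl, hl⟩, hall⟩
    · push_neg at hall
      obtain ⟨w, hw, hwP⟩ := hall
      obtain ⟨s, t, rfl⟩ := List.append_of_mem hw
      have hsuf : (w :: t) <:+ u :: (s ++ w :: t) := ⟨u :: s, rfl⟩
      refine ih (w :: t) ?_ w v₃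
        ⟨hc.suffix hsuf, hnd.sublist hsuf.sublist, rfl, ?_⟩ hwP
      · simp only [List.length_cons, List.length_append] at hR ⊢; omega
      · rw [← hl, getLast?_of_suffix hsuf (by simp)]

/-- The combination step: split `P` at `b` and attach `P₃`. -/
lemma combine {P P₃ : List V} {v₁ v₂ v₃ b : V}
    (hP : IsDiPath A P v₁ v₂) (hb : b ∈ P) (hP₃ : IsDiPath A P₃ b v₃)
    (hdisj : ∀ x ∈ P₃.tail, x ∉ P) (hv3 : v₃ ∉ P ∨ b = v₃) :
    ∃ (b : V) (P₁ P₂ P₃ : List V),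
      IsDiPath A P₁ v₁ b ∧ IsDiPath A P₂ b v₂ ∧ IsDiPath A P₃ b v₃ ∧
      (∀ x ∈ P₁.tail.dropLast,
        x ∉ P₂.tail.dropLast ∧ x ∉ P₃.tail.dropLast ∧ x ∉ ({v₁, v₂, v₃, b} : Set V)) ∧
      (∀ x ∈ P₂.tail.dropLast,
        x ∉ P₃.tail.dropLast ∧ x ∉ ({v₁, v₂, v₃, b} : Set V)) ∧
      (∀ x ∈ P₃.tail.dropLast, x ∉ ({v₁, v₂, v₃, b} : Set V)) := by
  obtain ⟨hc, hnd, hh, hl⟩ := hP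
  obtain ⟨hc₃, hnd₃, hh₃, hl₃⟩ := hP₃
  obtain ⟨s, t, rfl⟩ := List.append_of_mem hb
  -- basic disjointness from nodup
  have hdisj₁ : ∀ x ∈ s, x ∉ b :: t := fun x hx hx' =>
    (List.disjoint_of_nodup_append hnd) hx hx'
  have hbt : b ∉ t := by
    have h' := hnd.sublist (List.sublist_append_right s (b :: t))
    simp only [List.nodup_cons] at h'; exact h'.1
  have hlbt : (b :: t).getLast? = some v₂ := by
    rw [← hl, List.getLast?_append_of_ne_nil s (by simp)]
  have hv₂bt : v₂ ∈ b :: t := mem_of_getLast? hlbt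
  have hv₁mem : v₁ ∈ s ++ b :: t := mem_of_head? hh
  have hint1 : (s ++ [b]).tail.dropLast = s.tail := by
    cases s with
    | nil => simp
    | cons a s' => simp [List.dropLast_concat]
  have htail : ∀ x ∈ s.tail, x ∈ (s ++ b :: t).tail := by
    cases s with
    | nil => simp
    | cons a s' => intro x hx; simp only [List.tail_cons] at hx ⊢
                   exact List.mem_append_left _ hx
  have httail : ∀ x ∈ t, x ∈ (s ++ b :: t).tail := by
    cases s with
    | nil => intro x hx; simpa using hx
    | cons a s' => intro x hx; simp only [List.cons_append, List.tail_cons]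
                   exact List.mem_append_right _ (List.mem_cons_of_mem _ hx)
  have hv1tail : ∀ x ∈ (s ++ b :: t).tail, x ≠ v₁ := fun x hx =>
    ne_head_of_mem_tail hnd hh hx
  refine ⟨b, s ++ [b], b :: t, P₃, ⟨?_, ?_, ?_, List.getLast?_concat (l := s)⟩,
    ⟨hc.suffix ⟨s, rfl⟩, hnd.sublist (List.sublist_append_right s _), rfl, hlbt⟩,
    ⟨hc₃, hnd₃, hh₃, hl₃⟩, ?_, ?_, ?_⟩
  · exact hc.prefix ⟨t, by simp⟩
  · exact hnd.sublist (List.Sublist.append (List.Sublist.refl s) ((List.nil_sublist t).cons₂ b))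
  · cases s with
    | nil => simpa using hh
    | cons a s' => simpa using hh
  · -- internals of P₁
    rw [hint1]
    intro x hx
    have hxs : x ∈ s := List.mem_of_mem_tail hx
    have hxP : x ∈ s ++ b :: t := List.mem_append_left _ hxs
    have hxnbt : x ∉ b :: t := hdisj₁ x hxs
    refine ⟨fun h => hxnbt (List.mem_cons_of_mem _ ((List.dropLast_sublist t).mem h)), ?_, ?_⟩
    · exact fun h => hdisj x ((List.dropLast_sublist _).mem h) hxP
    · simp only [Set.mem_insert_iff, Set.mem_singleton_iff, not_or]
      refine ⟨hv1tail x (htail x hx), fun h => hxnbt (h ▸ hv₂bt), ?_,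
        fun h => hxnbt (by simp [h])⟩
      rcases hv3 with hv3 | rfl
      · exact fun h => hv3 (h ▸ hxP)
      · exact fun h => hxnbt (by simp [h])
  · -- internals of P₂
    intro x hx
    simp only [List.tail_cons] at hx
    have hxt : x ∈ t := (List.dropLast_sublist t).mem hx
    have hxP : x ∈ s ++ b :: t := List.mem_append_right _ (List.mem_cons_of_mem _ hxt)
    refine ⟨fun h => hdisj x ((List.dropLast_sublist _).mem h) hxP, ?_⟩
    simp only [Set.mem_insert_iff, Set.mem_singleton_iff, not_or]
    have hndbt : (b :: t).Nodup := hnd.sublist (List.sublist_append_right s _)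
    refine ⟨hv1tail x (httail x hxt), ?_, ?_, fun h => hbt (h ▸ hxt)⟩
    · exact ne_getLast_of_mem_dropLast hndbt hlbt
        (mem_dropLast_of_mem_tail_dropLast (l := b :: t) hx)
    · rcases hv3 with hv3 | rfl
      · exact fun h => hv3 (h ▸ hxP)
      · exact fun h => hbt (h ▸ hxt)
  · -- internals of P₃
    intro x hx
    have hx' : x ∈ P₃.tail := (List.dropLast_sublist _).mem hx
    have hxnP : x ∉ s ++ b :: t := hdisj x hx'
    simp only [Set.mem_insert_iff, Set.mem_singleton_iff, not_or]
    exact ⟨fun h => hxnP (h ▸ hv₁mem),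
      fun h => hxnP (h ▸ (List.mem_append_right _ hv₂bt)),
      ne_getLast_of_mem_dropLast hnd₃ hl₃ (mem_dropLast_of_mem_tail_dropLast hx),
      fun h => hxnP (h ▸ hb)⟩

end Aux

/-- In a strongly connected digraph, for distinct vertices `v₁, v₂, v₃`
there are a vertex `b` and directed paths `P₁ : v₁ → b`, `P₂ : b → v₂`, `P₃ : b → v₃`
which are pairwise internally vertex-disjoint and whose internal vertices avoid
`{v₁, v₂, v₃, b}`; in particular the paths share only the vertex `b`. -/
theorem exists_tripod {V : Type*} (A : V → V → Prop) (hsc : StronglyConnected A)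
    (v₁ v₂ v₃ : V) (h12 : v₁ ≠ v₂) (h13 : v₁ ≠ v₃) (h23 : v₂ ≠ v₃) :
    ∃ (b : V) (P₁ P₂ P₃ : List V),
      IsDiPath A P₁ v₁ b ∧ IsDiPath A P₂ b v₂ ∧ IsDiPath A P₃ b v₃ ∧
      (∀ x ∈ P₁.tail.dropLast,
        x ∉ P₂.tail.dropLast ∧ x ∉ P₃.tail.dropLast ∧ x ∉ ({v₁, v₂, v₃, b} : Set V)) ∧
      (∀ x ∈ P₂.tail.dropLast,
        x ∉ P₃.tail.dropLast ∧ x ∉ ({v₁, v₂, v₃, b} : Set V)) ∧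
      (∀ x ∈ P₃.tail.dropLast, x ∉ ({v₁, v₂, v₃, b} : Set V)) := by
  obtain ⟨P, hP⟩ := exists_dipath (hsc v₁ v₂)
  by_cases hv3 : v₃ ∈ P
  · exact combine hP hv3
      ⟨List.isChain_singleton v₃, List.nodup_singleton v₃, rfl, rfl⟩
      (by simp) (Or.inr rfl)
  · obtain ⟨R, hR⟩ := exists_dipath (hsc v₁ v₃)
    have hv₁P : v₁ ∈ P := mem_of_head? hP.2.2.1
    obtain ⟨b, hbP, P₃, hP₃, hdisj'⟩ := exists_exit P R.length R le_rfl v₁ v₃ hR hv₁P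
    exact combine hP hbP hP₃ hdisj' (Or.inl hv3)
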